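/- arXiv:2501.10887 — 2 statements merged into one kernel-verified Lean document; each statement's English description precedes it below -/
import Mathlib

section
/- The set of derivations of the Leibniz algebra L₁₂ is a linear subspace of End(V) of dimension 5; explicitly, a linear map d : V → V is a derivation of L₁₂ if and only if there exist complex numbers a, p, q, r, s such that d(e₁) = a·e₁ + p·e₃ + q·e₄, d(e₂) = a·e₂ + r·e₃ + s·e₄, d(e₃) = 2a·e₃, and d(e₄) = 2a·e₄. -/
/-- `V = ℂ⁴`. -/
abbrev V : Type := Fin 4 → ℂ

/-- standard basis: `e 0 = e₁`, ..., `e 3 = e₄`. -/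
def e (i : Fin 4) : V := Pi.single i 1

/-- Bracket of the Leibniz algebra `L₁₂`:
`⟦e₁,e₂⟧ = e₃`, `⟦e₂,e₁⟧ = e₄`, `⟦e₂,e₂⟧ = -e₃`, all other basis products zero. -/
def br (x y : V) : V :=
  (x 0 * y 1 - x 1 * y 1) • e 2 + (x 1 * y 0) • e 3

/-- A derivation. -/
def IsDer (d : V →ₗ[ℂ] V) : Prop :=
  ∀ x y : V, d (br x y) = br (d x) y + br x (d y)

lemma e_apply (i j : Fin 4) : e i j = if j = i then 1 else 0 := Pi.single_apply i 1 j

lemma decomp (x : V) : x = x 0 • e 0 + x 1 • e 1 + x 2 • e 2 + x 3 • e 3 := by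
  funext i; fin_cases i <;> simp [e_apply]

lemma br_apply (x y : V) (i : Fin 4) :
    br x y i = (x 0 * y 1 - x 1 * y 1) * (e 2 i) + (x 1 * y 0) * (e 3 i) := by
  simp [br]

lemma form_isDer (d : V →ₗ[ℂ] V) (a p q r s : ℂ)
    (h0 : d (e 0) = a • e 0 + p • e 2 + q • e 3)
    (h1 : d (e 1) = a • e 1 + r • e 2 + s • e 3)
    (h2 : d (e 2) = (2 * a) • e 2)
    (h3 : d (e 3) = (2 * a) • e 3) : IsDer d := by
  have key : ∀ z : V, d z = (a * z 0) • e 0 + (a * z 1) • e 1 +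
      (z 0 * p + z 1 * r + 2 * a * z 2) • e 2 +
      (z 0 * q + z 1 * s + 2 * a * z 3) • e 3 := by
    intro z
    conv_lhs => rw [decomp z]
    rw [map_add, map_add, map_add, map_smul, map_smul, map_smul, map_smul,
      h0, h1, h2, h3]
    module
  intro x y
  rw [key (br x y), key x, key y]
  funext i
  fin_cases i <;>
    simp [br_apply, e, Pi.single_apply] <;> ring

set_option linter.unreachableTactic false in
set_option linter.unusedTactic false in
lemma isDer_form (d : V →ₗ[ℂ] V) (h : IsDer d) :
    ∃ a p q r s : ℂ,
      d (e 0) = a • e 0 + p • e 2 + q • e 3 ∧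
      d (e 1) = a • e 1 + r • e 2 + s • e 3 ∧
      d (e 2) = (2 * a) • e 2 ∧
      d (e 3) = (2 * a) • e 3 := by
  have b00 : br (e 0) (e 0) = 0 := by funext i; fin_cases i <;> simp [br, e_apply]
  have b01 : br (e 0) (e 1) = e 2 := by funext i; fin_cases i <;> simp [br, e_apply]
  have b10 : br (e 1) (e 0) = e 3 := by funext i; fin_cases i <;> simp [br, e_apply]
  have b11 : br (e 1) (e 1) = -(e 2) := by funext i; fin_cases i <;> simp [br, e_apply]
  have h00 := h (e 0) (e 0); rw [b00, map_zero] at h00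
  have h01 := h (e 0) (e 1); rw [b01] at h01
  have h10 := h (e 1) (e 0); rw [b10] at h10
  have h11 := h (e 1) (e 1); rw [b11, map_neg] at h11
  have m10 : d (e 0) 1 = 0 := by
    have := congrFun h00 3; simp [br, e_apply] at this
    first | linear_combination this | linear_combination -this
  have hd2_0 : d (e 2) 0 = 0 := by
    have := congrFun h01 0; simp [br, e_apply] at this
    first | linear_combination this | linear_combination -this
  have hd2_1 : d (e 2) 1 = 0 := by
    have := congrFun h01 1; simp [br, e_apply] at this
    first | linear_combination this | linear_combination -this
  have hd2_3 : d (e 2) 3 = 0 := by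
    have := congrFun h01 3; simp [br, e_apply, m10] at this
    first | linear_combination this | linear_combination -this
  have m01 : d (e 1) 0 = 0 := by
    have := congrFun h11 3; simp [br, e_apply, m10, hd2_3] at this
    first | linear_combination this | linear_combination -this
  have hd2_2' : d (e 2) 2 = 2 * d (e 1) 1 := by
    have := congrFun h11 2; simp [br, e_apply, m01] at this
    first | linear_combination this | linear_combination -this
  have haa : d (e 0) 0 = d (e 1) 1 := by
    have := congrFun h01 2; simp [br, e_apply, m10, hd2_2'] at this
    first | linear_combination this | linear_combination -this
  have hd3_0 : d (e 3) 0 = 0 := by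
    have := congrFun h10 0; simp [br, e_apply] at this
    first | linear_combination this | linear_combination -this
  have hd3_1 : d (e 3) 1 = 0 := by
    have := congrFun h10 1; simp [br, e_apply] at this
    first | linear_combination this | linear_combination -this
  have hd3_2 : d (e 3) 2 = 0 := by
    have := congrFun h10 2; simp [br, e_apply, m10] at this
    first | linear_combination this | linear_combination -this
  have hd3_3 : d (e 3) 3 = 2 * d (e 1) 1 := by
    have := congrFun h10 3; simp [br, e_apply, haa] at this
    first | linear_combination this | linear_combination -this
  refine ⟨d (e 1) 1, d (e 0) 2, d (e 0) 3, d (e 1) 2, d (e 1) 3, ?_, ?_, ?_, ?_⟩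
  · funext i; fin_cases i <;> simp [e_apply, m10, haa]
  · funext i; fin_cases i <;> simp [e_apply, m01]
  · funext i; fin_cases i <;> simp [e_apply, hd2_0, hd2_1, hd2_3, hd2_2']
  · funext i; fin_cases i <;> simp [e_apply, hd3_0, hd3_1, hd3_2, hd3_3]

/-- The derivation determined by parameters `(a, p, q, r, s) = (c 0, c 1, c 2, c 3, c 4)`. -/
def Dmap (c : Fin 5 → ℂ) : V →ₗ[ℂ] V where
  toFun x := ![c 0 * x 0, c 0 * x 1,
    c 1 * x 0 + c 3 * x 1 + 2 * c 0 * x 2,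
    c 2 * x 0 + c 4 * x 1 + 2 * c 0 * x 3]
  map_add' x y := by funext i; fin_cases i <;> simp <;> ring
  map_smul' t x := by funext i; fin_cases i <;> simp [smul_eq_mul] <;> ring

/-- `Dmap` as a linear map in the parameters. -/
def f : (Fin 5 → ℂ) →ₗ[ℂ] (V →ₗ[ℂ] V) where
  toFun := Dmap
  map_add' c c' := by
    refine LinearMap.ext fun x => ?_
    funext i; fin_cases i <;> simp [Dmap] <;> ring
  map_smul' t c := by
    refine LinearMap.ext fun x => ?_
    funext i; fin_cases i <;> simp [Dmap, smul_eq_mul] <;> ring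

lemma ext_basis (d d' : V →ₗ[ℂ] V) (h : ∀ i, d (e i) = d' (e i)) : d = d' := by
  refine LinearMap.ext fun x => ?_
  conv_lhs => rw [decomp x]
  conv_rhs => rw [decomp x]
  simp [map_add, map_smul, h]

lemma f_inj : Function.Injective f := by
  intro c c' hcc
  have h0 := congrFun (LinearMap.congr_fun hcc (e 0))
  have h1 := congrFun (LinearMap.congr_fun hcc (e 1))
  funext j
  fin_cases j
  · have := h0 0; simpa [f, Dmap, e_apply] using this
  · have := h0 2; simpa [f, Dmap, e_apply] using this
  · have := h0 3; simpa [f, Dmap, e_apply] using this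
  · have := h1 2; simpa [f, Dmap, e_apply] using this
  · have := h1 3; simpa [f, Dmap, e_apply] using this

lemma Dmap_e (c : Fin 5 → ℂ) :
    Dmap c (e 0) = c 0 • e 0 + c 1 • e 2 + c 2 • e 3 ∧
    Dmap c (e 1) = c 0 • e 1 + c 3 • e 2 + c 4 • e 3 ∧
    Dmap c (e 2) = (2 * c 0) • e 2 ∧
    Dmap c (e 3) = (2 * c 0) • e 3 := by
  refine ⟨?_, ?_, ?_, ?_⟩ <;> (funext i; fin_cases i <;> simp [Dmap, e_apply])

theorem derivations_of_L12 :
    (∃ S : Submodule ℂ (V →ₗ[ℂ] V),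
      (S : Set (V →ₗ[ℂ] V)) = {d | IsDer d} ∧ Module.finrank ℂ S = 5) ∧
    (∀ d : V →ₗ[ℂ] V, IsDer d ↔ ∃ a p q r s : ℂ,
      d (e 0) = a • e 0 + p • e 2 + q • e 3 ∧
      d (e 1) = a • e 1 + r • e 2 + s • e 3 ∧
      d (e 2) = (2 * a) • e 2 ∧
      d (e 3) = (2 * a) • e 3) := by
  have hiff : ∀ d : V →ₗ[ℂ] V, IsDer d ↔ ∃ a p q r s : ℂ,
      d (e 0) = a • e 0 + p • e 2 + q • e 3 ∧
      d (e 1) = a • e 1 + r • e 2 + s • e 3 ∧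
      d (e 2) = (2 * a) • e 2 ∧
      d (e 3) = (2 * a) • e 3 := by
    intro d
    constructor
    · exact isDer_form d
    · rintro ⟨a, p, q, r, s, h0, h1, h2, h3⟩
      exact form_isDer d a p q r s h0 h1 h2 h3
  refine ⟨⟨LinearMap.range f, ?_, ?_⟩, hiff⟩
  · ext d
    simp only [SetLike.mem_coe, LinearMap.mem_range, Set.mem_setOf_eq]
    constructor
    · rintro ⟨c, rfl⟩
      obtain ⟨h0, h1, h2, h3⟩ := Dmap_e c
      exact form_isDer (f c) (c 0) (c 1) (c 2) (c 3) (c 4) h0 h1 h2 h3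
    · intro hd
      obtain ⟨a, p, q, r, s, h0, h1, h2, h3⟩ := isDer_form d hd
      refine ⟨![a, p, q, r, s], ?_⟩
      obtain ⟨g0, g1, g2, g3⟩ := Dmap_e ![a, p, q, r, s]
      refine ext_basis _ _ fun i => ?_
      show Dmap ![a, p, q, r, s] (e i) = d (e i)
      fin_cases i <;> simp_all
  · rw [LinearMap.finrank_range_of_inj f_inj]
    simp
end

section
/- The set of antiderivations of the Leibniz algebra L₁₂ is a linear subspace of End(V) of dimension 6; explicitly, a linear map D : V → V is an antiderivation of L₁₂ if and only if there exist complex numbers m, c, u, v, w, z such that D(e₁) = c·e₂ + u·e₃ + v·e₄, D(e₂) = m·e₁ − c·e₂ + w·e₃ + z·e₄, and D(e₃) = D(e₄) = 0. -/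
/-- An antiderivation. -/
def IsAntiDer (D : V →ₗ[ℂ] V) : Prop :=
  ∀ x y : V, D (br x y) = br x (D y) - br y (D x)

lemma Dapp (D : V →ₗ[ℂ] V) (x : V) :
    D x = x 0 • D (e 0) + x 1 • D (e 1) + x 2 • D (e 2) + x 3 • D (e 3) := by
  conv_lhs => rw [decomp x]
  simp

lemma ext_basis_s18 {D1 D2 : V →ₗ[ℂ] V} (h : ∀ j, D1 (e j) = D2 (e j)) : D1 = D2 :=
  LinearMap.ext fun x => by rw [Dapp D1, Dapp D2, h 0, h 1, h 2, h 3]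

lemma br_zero2 (x : V) : br x 0 = 0 := by
  funext i; simp [br]

lemma br_add2 (x a b : V) : br x (a + b) = br x a + br x b := by
  funext i; fin_cases i <;> simp [br, e_apply] <;> ring

lemma br_smul2 (x : V) (c : ℂ) (a : V) : br x (c • a) = c • br x a := by
  funext i; fin_cases i <;> simp [br, e_apply] <;> ring

lemma fwd (D : V →ₗ[ℂ] V) (h : IsAntiDer D) :
    D (e 0) 0 = 0 ∧ D (e 1) 1 = -(D (e 0) 1) ∧ D (e 2) = 0 ∧ D (e 3) = 0 := by
  have h1 : D (e 2) = 0 := by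
    have h11 := h (e 1) (e 1)
    have hb : br (e 1) (e 1) = -(e 2) := by
      funext i; simp [br, e_apply]
    rw [hb, map_neg, sub_self, neg_eq_zero] at h11
    exact h11
  have h01 := h (e 0) (e 1)
  have hb01 : br (e 0) (e 1) = e 2 := by funext i; simp [br, e_apply]
  rw [hb01, h1] at h01
  have hc2 := congrFun h01 2
  have hc3 := congrFun h01 3
  simp [br, e_apply] at hc2 hc3
  have hn : D (e 1) 1 = -(D (e 0) 1) := by linear_combination -hc2
  refine ⟨hc3, hn, h1, ?_⟩
  have h10 := h (e 1) (e 0)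
  have hb10 : br (e 1) (e 0) = e 3 := by funext i; simp [br, e_apply]
  rw [hb10] at h10
  rw [h10]
  funext i; fin_cases i <;> simp [br, e_apply, hc3, hn]

lemma bwd (D : V →ₗ[ℂ] V) (m c u v w z : ℂ)
    (h0 : D (e 0) = c • e 1 + u • e 2 + v • e 3)
    (h1 : D (e 1) = m • e 0 + (-c) • e 1 + w • e 2 + z • e 3)
    (h2 : D (e 2) = 0) (h3 : D (e 3) = 0) : IsAntiDer D := by
  intro x y
  have hbr : D (br x y) = 0 := by
    rw [Dapp D (br x y)]
    have b0 : br x y 0 = 0 := by simp [br, e_apply]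
    have b1 : br x y 1 = 0 := by simp [br, e_apply]
    rw [b0, b1, h2, h3]; simp
  rw [hbr, Dapp D x, Dapp D y, h0, h1, h2, h3]
  funext i; fin_cases i <;> simp [br, e_apply] <;> ring

lemma charac (D : V →ₗ[ℂ] V) : IsAntiDer D ↔ ∃ m c u v w z : ℂ,
      D (e 0) = c • e 1 + u • e 2 + v • e 3 ∧
      D (e 1) = m • e 0 + (-c) • e 1 + w • e 2 + z • e 3 ∧
      D (e 2) = 0 ∧ D (e 3) = 0 := by
  constructor
  · intro h
    obtain ⟨ha, hn, h2, h3⟩ := fwd D h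
    refine ⟨D (e 1) 0, D (e 0) 1, D (e 0) 2, D (e 0) 3, D (e 1) 2, D (e 1) 3, ?_, ?_, h2, h3⟩
    · funext i; fin_cases i <;> simp [e_apply, ha]
    · funext i; fin_cases i <;> simp [e_apply, hn]
  · rintro ⟨m, c, u, v, w, z, h0, h1, h2, h3⟩
    exact bwd D m c u v w z h0 h1 h2 h3

/-- matrix of an antiderivation with given parameters -/
def Mat (p : Fin 6 → ℂ) : Matrix (Fin 4) (Fin 4) ℂ :=
  !![0, p 0, 0, 0; p 1, -(p 1), 0, 0; p 2, p 4, 0, 0; p 3, p 5, 0, 0]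

noncomputable def Dof (p : Fin 6 → ℂ) : V →ₗ[ℂ] V := Matrix.toLin' (Mat p)

lemma Dof_e (p : Fin 6 → ℂ) (j : Fin 4) : Dof p (e j) = fun i => Mat p i j := by
  funext i
  simp [Dof, Matrix.toLin'_apply, Matrix.mulVec, dotProduct, e_apply,
    Fin.sum_univ_four]

lemma Dof_antider (p : Fin 6 → ℂ) : IsAntiDer (Dof p) := by
  apply bwd (Dof p) (p 0) (p 1) (p 2) (p 3) (p 4) (p 5) <;>
    rw [Dof_e] <;> funext i <;> fin_cases i <;> simp [Mat, e_apply, Matrix.vecHead, Matrix.vecTail]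

noncomputable def fmap : (V →ₗ[ℂ] V) →ₗ[ℂ] (Fin 6 → ℂ) :=
  LinearMap.pi fun j =>
    (LinearMap.proj (![0, 1, 2, 3, 2, 3] j : Fin 4)) ∘ₗ
      (LinearMap.applyₗ (e (![1, 0, 0, 0, 1, 1] j)))

lemma fmap_apply (D : V →ₗ[ℂ] V) (j : Fin 6) :
    fmap D j = D (e (![1, 0, 0, 0, 1, 1] j)) (![0, 1, 2, 3, 2, 3] j) := rfl

lemma idx5a : (![0, 1, 2, 3, 2, 3] : Fin 6 → Fin 4) 5 = 3 := rfl
lemma idx5b : (![1, 0, 0, 0, 1, 1] : Fin 6 → Fin 4) 5 = 1 := rfl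

lemma fmap_Dof (p : Fin 6 → ℂ) : fmap (Dof p) = p := by
  funext j
  fin_cases j <;> rw [fmap_apply, Dof_e] <;> simp [Mat, Matrix.vecHead, Matrix.vecTail, idx5a, idx5b]

lemma antider_eq_Dof (D : V →ₗ[ℂ] V) (h : IsAntiDer D) : D = Dof (fmap D) := by
  obtain ⟨ha, hn, h2, h3⟩ := fwd D h
  apply ext_basis_s18
  intro j
  rw [Dof_e]
  funext i
  fin_cases j <;> fin_cases i <;>
    simp [Mat, fmap_apply, ha, hn, congrFun h2, congrFun h3, Matrix.vecHead, Matrix.vecTail, idx5a, idx5b]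

noncomputable def S : Submodule ℂ (V →ₗ[ℂ] V) where
  carrier := {D | IsAntiDer D}
  zero_mem' := by intro x y; simp [br_zero2]
  add_mem' := by
    intro a b ha hb x y
    simp only [LinearMap.add_apply, ha x y, hb x y, br_add2]
    abel
  smul_mem' := by
    intro c a ha x y
    simp only [LinearMap.smul_apply, ha x y, br_smul2, smul_sub]

theorem antiderivations_of_L12 :
    (∃ S : Submodule ℂ (V →ₗ[ℂ] V),
      (S : Set (V →ₗ[ℂ] V)) = {D | IsAntiDer D} ∧ Module.finrank ℂ S = 6) ∧
    (∀ D : V →ₗ[ℂ] V, IsAntiDer D ↔ ∃ m c u v w z : ℂ,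
      D (e 0) = c • e 1 + u • e 2 + v • e 3 ∧
      D (e 1) = m • e 0 + (-c) • e 1 + w • e 2 + z • e 3 ∧
      D (e 2) = 0 ∧ D (e 3) = 0) := by
  constructor
  · refine ⟨S, rfl, ?_⟩
    have hbij : Function.Bijective (fmap ∘ₗ S.subtype) := by
      constructor
      · intro x y hxy
        have : fmap x.1 = fmap y.1 := hxy
        exact Subtype.ext (by rw [antider_eq_Dof _ x.2, antider_eq_Dof _ y.2, this])
      · intro p
        exact ⟨⟨Dof p, Dof_antider p⟩, fmap_Dof p⟩
    have equiv := LinearEquiv.ofBijective _ hbij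
    rw [equiv.finrank_eq]
    simp [Module.finrank_pi]
  · exact charac
end
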